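/- Let e, f, g be nonzero real numbers and set D := −(e·f + f·g + g·e). If D > 0 and √D < |e|, √D < |f|, √D < |g|, then artanh(√D/e) + artanh(√D/f) + artanh(√D/g) = 0, where artanh is the inverse hyperbolic tangent. (This is the D > 0, arctanh part of the paper's Lemma on vertex identities in a topograph: e, f, g are the oriented edge labels at a vertex and D is the discriminant.) -/
import Mathlib


/-- The inverse hyperbolic tangent. -/
noncomputable def artanh (x : ℝ) : ℝ := (1 / 2) * Real.log ((1 + x) / (1 - x))

theorem stmt_6 (e f g : ℝ) (he : e ≠ 0) (hf : f ≠ 0) (hg : g ≠ 0)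
    (hD : 0 < -(e * f + f * g + g * e))
    (h1 : Real.sqrt (-(e * f + f * g + g * e)) < |e|)
    (h2 : Real.sqrt (-(e * f + f * g + g * e)) < |f|)
    (h3 : Real.sqrt (-(e * f + f * g + g * e)) < |g|) :
    artanh (Real.sqrt (-(e * f + f * g + g * e)) / e) +
      artanh (Real.sqrt (-(e * f + f * g + g * e)) / f) +
      artanh (Real.sqrt (-(e * f + f * g + g * e)) / g) = 0 := by
  set s := Real.sqrt (-(e * f + f * g + g * e)) with hs
  have hs0 : 0 ≤ s := Real.sqrt_nonneg _
  have hs2 : s * s = -(e * f + f * g + g * e) := Real.mul_self_sqrt hD.le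
  have habs : ∀ x : ℝ, x ≠ 0 → s < |x| → -1 < s / x ∧ s / x < 1 := by
    intro x hx hlt
    have hx0 : 0 < |x| := lt_of_le_of_lt hs0 hlt
    have : |s / x| < 1 := by
      rw [abs_div, abs_of_nonneg hs0]
      exact (div_lt_one hx0).mpr hlt
    exact abs_lt.mp this
  obtain ⟨he1, he2⟩ := habs e he h1
  obtain ⟨hf1, hf2⟩ := habs f hf h2
  obtain ⟨hg1, hg2⟩ := habs g hg h3
  have hA : 0 < (1 + s / e) / (1 - s / e) := by
    apply div_pos <;> linarith
  have hB : 0 < (1 + s / f) / (1 - s / f) := by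
    apply div_pos <;> linarith
  have hC : 0 < (1 + s / g) / (1 - s / g) := by
    apply div_pos <;> linarith
  have hprod : ((1 + s / e) / (1 - s / e)) * ((1 + s / f) / (1 - s / f)) *
      ((1 + s / g) / (1 - s / g)) = 1 := by
    have hde : (1 : ℝ) - s / e ≠ 0 := by linarith
    have hdf : (1 : ℝ) - s / f ≠ 0 := by linarith
    have hdg : (1 : ℝ) - s / g ≠ 0 := by linarith
    have key : (1 + s / e) * (1 + s / f) * (1 + s / g) =
        (1 - s / e) * (1 - s / f) * (1 - s / g) := by
      field_simp
      ring_nf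
      linear_combination (2 * s) * hs2
    rw [div_mul_div_comm, div_mul_div_comm, key, div_self]
    exact mul_ne_zero (mul_ne_zero hde hdf) hdg
  simp only [artanh]
  rw [← mul_add, ← mul_add, ← Real.log_mul hA.ne' hB.ne', ← Real.log_mul (mul_pos hA hB).ne' hC.ne',
    hprod, Real.log_one, mul_zero]
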